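/- arXiv:2205.03672 — 4 statements merged into one kernel-verified Lean document; each statement's English description precedes it below -/
import Mathlib

section
/- Let m, s ∈ (0,∞), u₀ ∈ ℝ, define S : [0,∞) → (0,∞) by S(t) = m·(m·sinh(m t) + s·cosh(m t))/(m·cosh(m t) + s·sinh(m t)) and U : [0,∞) → ℝ by U(t) = m·u₀/(m·cosh(m t) + s·sinh(m t)). Then U(0) = u₀ and for all t ≥ 0 it holds that U'(t) = −S(t)·U(t). -/
theorem stmt_1 (m s u₀ : ℝ) (hm : 0 < m) (hs : 0 < s)
    (S U : ℝ → ℝ)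
    (hS : ∀ t : ℝ, S t =
      m * (m * Real.sinh (m * t) + s * Real.cosh (m * t)) /
        (m * Real.cosh (m * t) + s * Real.sinh (m * t)))
    (hU : ∀ t : ℝ, U t = m * u₀ / (m * Real.cosh (m * t) + s * Real.sinh (m * t))) :
    U 0 = u₀ ∧
    (∀ t : ℝ, 0 ≤ t → HasDerivAt U (-(S t) * U t) t) := by
  constructor
  · rw [hU]
    simp [hm.ne']
  · intro t ht
    have hD : 0 < m * Real.cosh (m * t) + s * Real.sinh (m * t) := by
      have h1 : 0 < Real.cosh (m * t) := Real.cosh_pos _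
      have h2 : 0 ≤ Real.sinh (m * t) := by
        rw [← Real.sinh_zero]
        exact Real.sinh_le_sinh.mpr (by positivity)
      positivity
    have hmt : HasDerivAt (fun x : ℝ => m * x) m t := by
      simpa using (hasDerivAt_id t).const_mul m
    have hc : HasDerivAt (fun x : ℝ => Real.cosh (m * x)) (Real.sinh (m * t) * m) t :=
      (Real.hasDerivAt_cosh (m * t)).comp t hmt
    have hsh : HasDerivAt (fun x : ℝ => Real.sinh (m * x)) (Real.cosh (m * t) * m) t :=
      (Real.hasDerivAt_sinh (m * t)).comp t hmt
    have hDd : HasDerivAt (fun x : ℝ => m * Real.cosh (m * x) + s * Real.sinh (m * x))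
        (m * (Real.sinh (m * t) * m) + s * (Real.cosh (m * t) * m)) t :=
      (hc.const_mul m).add (hsh.const_mul s)
    have hUd : HasDerivAt (fun x : ℝ => m * u₀ / (m * Real.cosh (m * x) + s * Real.sinh (m * x)))
        ((0 * (m * Real.cosh (m * t) + s * Real.sinh (m * t)) -
          m * u₀ * (m * (Real.sinh (m * t) * m) + s * (Real.cosh (m * t) * m))) /
          (m * Real.cosh (m * t) + s * Real.sinh (m * t)) ^ 2) t :=
      (hasDerivAt_const t (m * u₀)).div hDd hD.ne'
    have hUe : U = fun x : ℝ => m * u₀ / (m * Real.cosh (m * x) + s * Real.sinh (m * x)) :=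
      funext hU
    rw [hS t, hU t, hUe]
    have key : -(m * (m * Real.sinh (m * t) + s * Real.cosh (m * t)) /
        (m * Real.cosh (m * t) + s * Real.sinh (m * t))) *
        (m * u₀ / (m * Real.cosh (m * t) + s * Real.sinh (m * t))) =
        (0 * (m * Real.cosh (m * t) + s * Real.sinh (m * t)) -
          m * u₀ * (m * (Real.sinh (m * t) * m) + s * (Real.cosh (m * t) * m))) /
          (m * Real.cosh (m * t) + s * Real.sinh (m * t)) ^ 2 := by
      field_simp
      ring
    rw [key]
    exact hUd
end

section
/- Let d ∈ ℕ, let S_i : [0,∞) → (0,∞) and U_i : [0,∞) → ℝ for i = 1,…,d be continuously differentiable with S_i'(t) = m_i² − S_i(t)² and U_i'(t) = −S_i(t)·U_i(t) for positive reals m_1,…,m_d, and let u : [0,∞)×ℝ^d → ℝ be given by u(t,x) = ∏_{i=1}^d (2π S_i(t))^{−1/2} exp(−(x_i−U_i(t))²/(2 S_i(t))). Then for all t ≥ 0, x ∈ ℝ^d it holds that ∂u/∂t(t,x) = (u(t,x)/2)·∑_{i=1}^d [ m_i²·(((x_i−U_i(t))/S_i(t))² − 1/S_i(t)) + S_i(t)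 + U_i(t)² − x_i² ]. -/
open Real

lemma factor_deriv (a s' v' : ℝ) (S U : ℝ → ℝ) (t : ℝ) (hs : 0 < S t)
    (hS : HasDerivAt S s' t) (hU : HasDerivAt U v' t) :
    HasDerivAt (fun τ => (Real.sqrt (2 * Real.pi * S τ))⁻¹ *
        Real.exp (-(a - U τ) ^ 2 / (2 * S τ)))
      (((Real.sqrt (2 * Real.pi * S t))⁻¹ * Real.exp (-(a - U t) ^ 2 / (2 * S t))) *
        ((a - U t) * v' / S t + (a - U t) ^ 2 * s' / (2 * (S t) ^ 2) - s' / (2 * S t))) t := by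
  have hπ : (0:ℝ) < Real.pi := Real.pi_pos
  have h2s : (0:ℝ) < 2 * Real.pi * S t := by positivity
  have hq : 0 < Real.sqrt (2 * Real.pi * S t) := Real.sqrt_pos.mpr h2s
  have hsq : Real.sqrt (2 * Real.pi * S t) ^ 2 = 2 * Real.pi * S t :=
    Real.sq_sqrt h2s.le
  have h1 : HasDerivAt (fun τ => (Real.sqrt (2 * Real.pi * S τ))⁻¹)
      (-(2 * Real.pi * s' / (2 * Real.sqrt (2 * Real.pi * S t))) /
        (Real.sqrt (2 * Real.pi * S t)) ^ 2) t :=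
    ((hS.const_mul (2 * Real.pi)).sqrt h2s.ne').inv hq.ne'
  have h2 : HasDerivAt (fun τ => -(a - U τ) ^ 2 / (2 * S τ))
      ((-(2 * (a - U t) ^ 1 * (0 - v')) * (2 * S t) - (-(a - U t) ^ 2) * (2 * s')) /
        (2 * S t) ^ 2) t :=
    (((((hasDerivAt_const t a).sub hU).pow 2).neg).div (hS.const_mul 2)
      (by positivity))
  have := h1.mul h2.exp
  convert this using 1
  case e'_4 => rfl
  case e'_5 => rfl
  case e'_8 => rfl
  set q := Real.sqrt (2 * Real.pi * S t)
  set e := Real.exp (-(a - U t) ^ 2 / (2 * S t))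
  have hqs : q ^ 2 = 2 * Real.pi * S t := hsq
  rw [show (2:ℝ) * Real.pi = q ^ 2 / S t from by rw [hqs]; field_simp]
  field_simp
  ring

theorem stmt_5 (d : ℕ) (m : Fin d → ℝ) (hm : ∀ i, 0 < m i)
    (S U : Fin d → ℝ → ℝ)
    (hSpos : ∀ i, ∀ t : ℝ, 0 ≤ t → 0 < S i t)
    (hSderiv : ∀ i, ∀ t : ℝ, 0 ≤ t → HasDerivAt (S i) ((m i) ^ 2 - (S i t) ^ 2) t)
    (hUderiv : ∀ i, ∀ t : ℝ, 0 ≤ t → HasDerivAt (U i) (-(S i t) * U i t) t)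
    (hSc : ∀ i, ContDiff ℝ 1 (S i)) (hUc : ∀ i, ContDiff ℝ 1 (U i))
    (u : ℝ → (Fin d → ℝ) → ℝ)
    (hu : ∀ (t : ℝ) (x : Fin d → ℝ), u t x =
      ∏ i, (Real.sqrt (2 * Real.pi * S i t))⁻¹ *
        Real.exp (-(x i - U i t) ^ 2 / (2 * S i t))) :
    ∀ (t : ℝ), 0 ≤ t → ∀ (x : Fin d → ℝ),
      HasDerivAt (fun τ => u τ x)
        (u t x / 2 * ∑ i, ((m i) ^ 2 * (((x i - U i t) / S i t) ^ 2 - 1 / S i t)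
          + S i t + (U i t) ^ 2 - (x i) ^ 2)) t := by
  intro t ht x
  set F : Fin d → ℝ → ℝ := fun i τ =>
    (Real.sqrt (2 * Real.pi * S i τ))⁻¹ * Real.exp (-(x i - U i τ) ^ 2 / (2 * S i τ))
  set G : Fin d → ℝ := fun i =>
    (1/2) * ((m i) ^ 2 * (((x i - U i t) / S i t) ^ 2 - 1 / S i t)
      + S i t + (U i t) ^ 2 - (x i) ^ 2)
  have hFi : ∀ i ∈ Finset.univ, HasDerivAt (F i) (F i t * G i) t := by
    intro i _
    have hs := hSpos i t ht
    have h := factor_deriv (x i) ((m i) ^ 2 - (S i t) ^ 2) (-(S i t) * U i t)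
      (S i) (U i) t hs (hSderiv i t ht) (hUderiv i t ht)
    convert h using 1
    show F i t * G i = F i t * _
    congr 1
    simp only [G]
    field_simp
    ring
  have hprod := HasDerivAt.finset_prod hFi
  have huu : (fun τ => u τ x) = (∏ i ∈ Finset.univ, F i ·) := by
    funext τ; rw [hu τ x]
  rw [huu]
  convert hprod using 1
  case e'_4 => rfl
  case e'_5 => rfl
  case e'_8 => funext τ; exact (Finset.prod_apply τ _ _).symm
  have hFt : ∀ i, ∏ j ∈ Finset.univ.erase i, F j t = u t x / F i t := by
    intro i
    have hFpos : F i t ≠ 0 := by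
      have hs := hSpos i t ht
      have : (0:ℝ) < 2 * Real.pi * S i t := by positivity
      simp only [F]
      positivity
    rw [eq_div_iff hFpos, hu t x]
    rw [← Finset.prod_erase_mul Finset.univ _ (Finset.mem_univ i)]
  rw [Finset.mul_sum]
  congr 1
  funext i
  rw [hFt i]
  have hFpos : F i t ≠ 0 := by
    have hs := hSpos i t ht
    have : (0:ℝ) < 2 * Real.pi * S i t := by positivity
    simp only [F]
    positivity
  simp only [smul_eq_mul, G]
  field_simp
end

section
/- Let d ∈ ℕ, m_1,…,m_d, s_1,…,s_d ∈ (0,∞), u_1,…,u_d ∈ ℝ, define for each i the functions S_i(t) = m_i·(m_i sinh(m_i t) + s_i cosh(m_i t))/(m_i cosh(m_i t) + s_i sinh(m_i t)) and U_i(t) = m_i u_i/(m_i cosh(m_i t) + s_i sinh(m_i t)), let a(x) = −½‖x‖², and let u(t,x) = (2π)^{−d/2} (∏_{i=1}^d S_i(t)^{−1/2}) exp(−∑_{i=1}^d (x_i−U_i(t))²/(2 S_i(t))). Then for every t ≥ 0 and x ∈ ℝ^d it holds that ∂u/∂t(t,x) = u(t,x)·(a(x) − ∫_{ℝ^d} u(t,y)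 a(y) dy) + ∑_{i=1}^d ½ m_i² ∂²u/∂x_i²(t,x). -/
open Real MeasureTheory Filter Finset Topology

lemma tendsto_mul_exp_atTop {b : ℝ} (hb : 0 < b) :
    Tendsto (fun x : ℝ => x * Real.exp (-b * x ^ 2)) atTop (nhds 0) := by
  have h := rpow_mul_exp_neg_mul_sq_isLittleO_exp_neg hb 1
  simp only [Real.rpow_one] at h
  have h2 : Tendsto (fun x : ℝ => Real.exp (-(1/2) * x)) atTop (nhds 0) := by
    have := Real.tendsto_exp_atBot
    apply this.comp
    exact (tendsto_const_mul_atBot_of_neg (by norm_num)).mpr tendsto_id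
  exact h.isBigO.trans_tendsto h2

lemma tendsto_mul_exp_atBot {b : ℝ} (hb : 0 < b) :
    Tendsto (fun x : ℝ => x * Real.exp (-b * x ^ 2)) atBot (nhds 0) := by
  have h := ((tendsto_mul_exp_atTop hb).neg).comp tendsto_neg_atBot_atTop
  simp only [Function.comp_def, neg_zero, neg_sq, neg_mul, neg_neg] at h
  simpa [neg_mul] using h

lemma integral_sq_exp_neg {b : ℝ} (hb : 0 < b) :
    ∫ x : ℝ, x ^ 2 * Real.exp (-b * x ^ 2) = Real.sqrt (Real.pi / b) / (2 * b) := by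
  have hderiv : ∀ x : ℝ, HasDerivAt (fun y : ℝ => y * Real.exp (-b * y ^ 2))
      (Real.exp (-b * x ^ 2) - 2 * b * (x ^ 2 * Real.exp (-b * x ^ 2))) x := by
    intro x
    have h1 : HasDerivAt (fun y : ℝ => -b * y ^ 2) (-b * (2 * x)) x := by
      simpa using ((hasDerivAt_pow 2 x).const_mul (-b))
    have := (hasDerivAt_id x).mul h1.exp
    refine this.congr_deriv ?_
    simp only [id]
    ring
  have hint : Integrable (fun x : ℝ => Real.exp (-b * x ^ 2) - 2 * b * (x ^ 2 * Real.exp (-b * x ^ 2))) := by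
    have h2 : Integrable (fun x : ℝ => x ^ 2 * Real.exp (-b * x ^ 2)) := by
      have := integrable_rpow_mul_exp_neg_mul_sq hb (s := 2) (by norm_num)
      simpa [Real.rpow_two] using this
    exact (integrable_exp_neg_mul_sq hb).sub (h2.const_mul _)
  have key := integral_of_hasDerivAt_of_tendsto hderiv hint (tendsto_mul_exp_atBot hb) (tendsto_mul_exp_atTop hb)
  rw [sub_zero] at key
  have h2 : Integrable (fun x : ℝ => x ^ 2 * Real.exp (-b * x ^ 2)) := by
    have := integrable_rpow_mul_exp_neg_mul_sq hb (s := 2) (by norm_num)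
    simpa [Real.rpow_two] using this
  rw [integral_sub (integrable_exp_neg_mul_sq hb) (h2.const_mul _), MeasureTheory.integral_const_mul,
    integral_gaussian] at key
  have hb' : (2 : ℝ) * b ≠ 0 := by positivity
  field_simp at key ⊢
  linarith

lemma integral_id_exp_neg {b : ℝ} (hb : 0 < b) :
    ∫ x : ℝ, x * Real.exp (-b * x ^ 2) = 0 := by
  have h := MeasureTheory.integral_neg_eq_self (fun x : ℝ => x * Real.exp (-b * x ^ 2)) volume
  simp only [neg_sq, neg_mul, neg_neg] at h
  rw [MeasureTheory.integral_neg] at h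
  simp only [neg_mul] at h ⊢
  linarith

lemma exp_shift_eq {σ c : ℝ} : ∀ z : ℝ, Real.exp (-((z - c) ^ 2 / (2 * σ)))
    = Real.exp (-(2*σ)⁻¹ * (z - c) ^ 2) := by
  intro z; congr 1; field_simp

lemma integral_gauss_mass {σ : ℝ} (hσ : 0 < σ) (c : ℝ) :
    ∫ z : ℝ, Real.exp (-((z - c) ^ 2 / (2 * σ))) = Real.sqrt (2 * Real.pi * σ) := by
  have hb : 0 < (2*σ)⁻¹ := by positivity
  simp_rw [exp_shift_eq]
  rw [MeasureTheory.integral_sub_right_eq_self (fun z : ℝ => Real.exp (-(2*σ)⁻¹ * z ^ 2)) c,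
    integral_gaussian]
  congr 1
  field_simp

lemma integral_gauss_moment2 {σ : ℝ} (hσ : 0 < σ) (c : ℝ) :
    ∫ z : ℝ, z ^ 2 * Real.exp (-((z - c) ^ 2 / (2 * σ)))
      = (σ + c ^ 2) * Real.sqrt (2 * Real.pi * σ) := by
  have hb : 0 < (2*σ)⁻¹ := by positivity
  simp_rw [exp_shift_eq]
  have h1 : (fun z : ℝ => z ^ 2 * Real.exp (-(2*σ)⁻¹ * (z - c) ^ 2))
      = (fun z : ℝ => ((z - c) + c) ^ 2 * Real.exp (-(2*σ)⁻¹ * (z - c) ^ 2)) := by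
    funext z; ring_nf
  rw [h1, MeasureTheory.integral_sub_right_eq_self
    (fun z : ℝ => (z + c) ^ 2 * Real.exp (-(2*σ)⁻¹ * z ^ 2)) c]
  have hsq : Integrable (fun z : ℝ => z ^ 2 * Real.exp (-(2*σ)⁻¹ * z ^ 2)) := by
    have := integrable_rpow_mul_exp_neg_mul_sq hb (s := 2) (by norm_num)
    simpa [Real.rpow_two] using this
  have hid : Integrable (fun z : ℝ => z * Real.exp (-(2*σ)⁻¹ * z ^ 2)) :=
    integrable_mul_exp_neg_mul_sq hb
  have hexp : Integrable (fun z : ℝ => Real.exp (-(2*σ)⁻¹ * z ^ 2)) :=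
    integrable_exp_neg_mul_sq hb
  have expand : (fun z : ℝ => (z + c) ^ 2 * Real.exp (-(2*σ)⁻¹ * z ^ 2))
      = (fun z : ℝ => z ^ 2 * Real.exp (-(2*σ)⁻¹ * z ^ 2)
          + ((2*c) * (z * Real.exp (-(2*σ)⁻¹ * z ^ 2))
          + c ^ 2 * Real.exp (-(2*σ)⁻¹ * z ^ 2))) := by
    funext z; ring
  have hig : Integrable (fun z : ℝ => (2*c) * (z * Real.exp (-(2*σ)⁻¹ * z ^ 2))
      + c ^ 2 * Real.exp (-(2*σ)⁻¹ * z ^ 2)) := (hid.const_mul _).add (hexp.const_mul _)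
  rw [expand, integral_add hsq hig,
    integral_add (hid.const_mul (2*c)) (hexp.const_mul (c^2)),
    MeasureTheory.integral_const_mul, MeasureTheory.integral_const_mul,
    integral_sq_exp_neg hb, integral_id_exp_neg hb, integral_gaussian]
  have h2 : Real.pi / (2*σ)⁻¹ = 2 * Real.pi * σ := by field_simp
  rw [h2]
  have h3 : (2 * (2*σ)⁻¹) = σ⁻¹ := by field_simp
  rw [h3]
  field_simp
  ring

lemma const_gauss : ∀ {σ : ℝ}, 0 < σ →
    (2 * Real.pi) ^ (-(1:ℝ)/2) * σ ^ (-(1:ℝ)/2) * Real.sqrt (2 * Real.pi * σ) = 1 := by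
  intro σ hσ
  have h2π : (0:ℝ) < 2 * Real.pi := by positivity
  rw [Real.sqrt_mul h2π.le]
  have e1 : (2 * Real.pi) ^ (-(1:ℝ)/2) = (Real.sqrt (2 * Real.pi))⁻¹ := by
    rw [Real.sqrt_eq_rpow, ← Real.rpow_neg h2π.le]; norm_num
  have e2 : σ ^ (-(1:ℝ)/2) = (Real.sqrt σ)⁻¹ := by
    rw [Real.sqrt_eq_rpow, ← Real.rpow_neg hσ.le]; norm_num
  rw [e1, e2]
  have : Real.sqrt (2 * Real.pi) ≠ 0 := by positivity
  have : Real.sqrt σ ≠ 0 := by positivity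
  field_simp

lemma integrable_gauss1 {σ : ℝ} (hσ : 0 < σ) (c : ℝ) :
    Integrable (fun z : ℝ => Real.exp (-((z - c) ^ 2 / (2 * σ)))) := by
  have hb : 0 < (2*σ)⁻¹ := by positivity
  simp_rw [exp_shift_eq]
  exact (integrable_exp_neg_mul_sq hb).comp_sub_right c

lemma integrable_gauss2 {σ : ℝ} (hσ : 0 < σ) (c : ℝ) :
    Integrable (fun z : ℝ => z ^ 2 * Real.exp (-((z - c) ^ 2 / (2 * σ)))) := by
  have hb : 0 < (2*σ)⁻¹ := by positivity
  simp_rw [exp_shift_eq]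
  have hsq : Integrable (fun z : ℝ => z ^ 2 * Real.exp (-(2*σ)⁻¹ * z ^ 2)) := by
    have := integrable_rpow_mul_exp_neg_mul_sq hb (s := 2) (by norm_num)
    simpa [Real.rpow_two] using this
  have hid : Integrable (fun z : ℝ => z * Real.exp (-(2*σ)⁻¹ * z ^ 2)) :=
    integrable_mul_exp_neg_mul_sq hb
  have hexp : Integrable (fun z : ℝ => Real.exp (-(2*σ)⁻¹ * z ^ 2)) :=
    integrable_exp_neg_mul_sq hb
  have hG : Integrable (fun z : ℝ => (z + c) ^ 2 * Real.exp (-(2*σ)⁻¹ * z ^ 2)) := by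
    have : (fun z : ℝ => (z + c) ^ 2 * Real.exp (-(2*σ)⁻¹ * z ^ 2))
        = (fun z : ℝ => z ^ 2 * Real.exp (-(2*σ)⁻¹ * z ^ 2)
            + ((2*c) * (z * Real.exp (-(2*σ)⁻¹ * z ^ 2))
            + c ^ 2 * Real.exp (-(2*σ)⁻¹ * z ^ 2))) := by funext z; ring
    rw [this]
    exact hsq.add ((hid.const_mul _).add (hexp.const_mul _))
  have := hG.comp_sub_right c
  refine this.congr (Filter.Eventually.of_forall fun z => ?_)
  simp only
  ring_nf

lemma integral_prod_gauss (d : ℕ) (σ c : Fin d → ℝ) (hσ : ∀ i, 0 < σ i) :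
    ∫ y : Fin d → ℝ, ((2 * Real.pi) ^ (-(d:ℝ)/2) * (∏ i, (σ i) ^ (-(1:ℝ)/2)) *
        Real.exp (-∑ i, (y i - c i) ^ 2 / (2 * σ i))) * (-(1/2:ℝ) * ∑ i, (y i) ^ 2)
      = ∑ i, -(1/2:ℝ) * (σ i + (c i) ^ 2) := by
  set f : Fin d → ℝ → ℝ := fun j z =>
    (2 * Real.pi) ^ (-(1:ℝ)/2) * (σ j) ^ (-(1:ℝ)/2) * Real.exp (-((z - c j) ^ 2 / (2 * σ j)))
    with hf
  have h2π : (0:ℝ) < 2 * Real.pi := by positivity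
  have hprod : ∀ y : Fin d → ℝ,
      (2 * Real.pi) ^ (-(d:ℝ)/2) * (∏ i, (σ i) ^ (-(1:ℝ)/2)) *
        Real.exp (-∑ i, (y i - c i) ^ 2 / (2 * σ i)) = ∏ j, f j (y j) := by
    intro y
    have e1 : Real.exp (-∑ i, (y i - c i) ^ 2 / (2 * σ i))
        = ∏ i, Real.exp (-((y i - c i) ^ 2 / (2 * σ i))) := by
      rw [← Real.exp_sum]
      congr 1
      rw [← Finset.sum_neg_distrib]
    have e2 : (2 * Real.pi) ^ (-(d:ℝ)/2) = ∏ _i : Fin d, (2 * Real.pi) ^ (-(1:ℝ)/2) := by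
      rw [Finset.prod_const, Finset.card_univ, Fintype.card_fin,
        ← Real.rpow_natCast ((2 * Real.pi) ^ (-(1:ℝ)/2)) d, ← Real.rpow_mul h2π.le]
      congr 1
      push_cast
      ring
    rw [e1, e2, hf]
    rw [← Finset.prod_mul_distrib, ← Finset.prod_mul_distrib]
  have key : ∀ y : Fin d → ℝ,
      ((2 * Real.pi) ^ (-(d:ℝ)/2) * (∏ i, (σ i) ^ (-(1:ℝ)/2)) *
        Real.exp (-∑ i, (y i - c i) ^ 2 / (2 * σ i))) * (-(1/2:ℝ) * ∑ i, (y i) ^ 2)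
      = ∑ i, -(1/2:ℝ) * ∏ j, (if j = i then (y j) ^ 2 * f j (y j) else f j (y j)) := by
    intro y
    rw [hprod y]
    rw [Finset.mul_sum, Finset.mul_sum]
    congr 1
    funext i
    have : (∏ j, (if j = i then (y j) ^ 2 * f j (y j) else f j (y j)))
        = (y i) ^ 2 * ∏ j, f j (y j) := by
      rw [← Finset.mul_prod_erase Finset.univ _ (Finset.mem_univ i), if_pos rfl,
        ← Finset.mul_prod_erase Finset.univ (fun j => f j (y j)) (Finset.mem_univ i)]
      rw [Finset.prod_congr rfl (fun j hj => by
        rw [if_neg (Finset.ne_of_mem_erase hj)])]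
      ring
    rw [this]
    ring
  simp_rw [key]
  have hint : ∀ i j : Fin d, Integrable
      (fun z : ℝ => if j = i then z ^ 2 * f j z else f j z) := by
    intro i j
    by_cases h : j = i
    · subst h
      simp only [eq_self_iff_true, if_true, hf]
      have : (fun z : ℝ => z ^ 2 * ((2 * Real.pi) ^ (-(1:ℝ)/2) * (σ j) ^ (-(1:ℝ)/2) *
          Real.exp (-((z - c j) ^ 2 / (2 * σ j)))))
          = (fun z : ℝ => ((2 * Real.pi) ^ (-(1:ℝ)/2) * (σ j) ^ (-(1:ℝ)/2)) *
            (z ^ 2 * Real.exp (-((z - c j) ^ 2 / (2 * σ j))))) := by funext z; ring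
      rw [this]
      exact (integrable_gauss2 (hσ j) (c j)).const_mul _
    · simp only [if_neg h, hf]
      exact (integrable_gauss1 (hσ j) (c j)).const_mul _
  rw [MeasureTheory.integral_finset_sum (μ := volume) _ (fun i _ =>
    ((Integrable.fintype_prod (fun j => hint i j)).const_mul _))]
  congr 1
  funext i
  rw [MeasureTheory.integral_const_mul, MeasureTheory.integral_fintype_prod_volume_eq_prod
    (f := fun j z => if j = i then z ^ 2 * f j z else f j z)]
  have hval : ∀ j : Fin d, (∫ z : ℝ, (if j = i then z ^ 2 * f j z else f j z))
      = if j = i then σ i + (c i) ^ 2 else 1 := by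
    intro j
    by_cases h : j = i
    · subst h
      simp only [eq_self_iff_true, if_true]
      have : (fun z : ℝ => z ^ 2 * f j z)
          = (fun z : ℝ => ((2 * Real.pi) ^ (-(1:ℝ)/2) * (σ j) ^ (-(1:ℝ)/2)) *
            (z ^ 2 * Real.exp (-((z - c j) ^ 2 / (2 * σ j))))) := by funext z; rw [hf]; ring
      rw [this, MeasureTheory.integral_const_mul, integral_gauss_moment2 (hσ j) (c j)]
      have hc := const_gauss (hσ j)
      have h9 : (2 * Real.pi) ^ (-(1:ℝ)/2) * (σ j) ^ (-(1:ℝ)/2) *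
          ((σ j + (c j) ^ 2) * Real.sqrt (2 * Real.pi * σ j))
          = (σ j + (c j) ^ 2) * ((2 * Real.pi) ^ (-(1:ℝ)/2) * (σ j) ^ (-(1:ℝ)/2) *
            Real.sqrt (2 * Real.pi * σ j)) := by ring
      rw [h9, hc, mul_one]
    · simp only [if_neg h]
      rw [hf]
      simp only
      rw [MeasureTheory.integral_const_mul, integral_gauss_mass (hσ j) (c j)]
      exact const_gauss (hσ j)
  rw [Finset.prod_congr rfl (fun j _ => hval j)]
  rw [Finset.prod_ite_eq' Finset.univ i (fun _ => σ i + (c i) ^ 2)]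
  simp

lemma gauss_hasDerivAt (A c σ : ℝ) (hσ : σ ≠ 0) (y : ℝ) :
    HasDerivAt (fun y : ℝ => A * Real.exp (-((y - c) ^ 2 / (2 * σ))))
      (A * Real.exp (-((y - c) ^ 2 / (2 * σ))) * (-((y - c) / σ))) y := by
  have h1 : HasDerivAt (fun y : ℝ => -((y - c) ^ 2 / (2 * σ)))
      (-((2 * (y - c) ^ 1 * 1) / (2 * σ))) y := by
    exact ((((hasDerivAt_id y).sub_const c).pow 2).div_const (2 * σ)).neg
  have := (h1.exp.const_mul A)
  refine this.congr_deriv ?_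
  field_simp

lemma gauss_second_deriv (A c σ : ℝ) (hσ : σ ≠ 0) (z : ℝ) :
    deriv (deriv (fun y : ℝ => A * Real.exp (-((y - c) ^ 2 / (2 * σ))))) z
      = A * Real.exp (-((z - c) ^ 2 / (2 * σ))) * ((z - c) ^ 2 / σ ^ 2 - 1 / σ) := by
  have hd1 : deriv (fun y : ℝ => A * Real.exp (-((y - c) ^ 2 / (2 * σ))))
      = fun y => A * Real.exp (-((y - c) ^ 2 / (2 * σ))) * (-((y - c) / σ)) :=
    funext fun y => (gauss_hasDerivAt A c σ hσ y).deriv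
  rw [hd1]
  have h2 : HasDerivAt (fun y : ℝ => A * Real.exp (-((y - c) ^ 2 / (2 * σ))) * (-((y - c) / σ)))
      (A * Real.exp (-((z - c) ^ 2 / (2 * σ))) * (-((z - c) / σ)) * (-((z - c) / σ))
        + A * Real.exp (-((z - c) ^ 2 / (2 * σ))) * (-(1 / σ))) z := by
    have ha : HasDerivAt (fun y : ℝ => -((y - c) / σ)) (-(1 / σ)) z := by
      have := (((hasDerivAt_id z).sub_const c).div_const σ).neg
      simpa [Pi.neg_def] using this
    exact (gauss_hasDerivAt A c σ hσ z).mul ha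
  rw [h2.deriv]
  field_simp
  ring

theorem stmt_6 (d : ℕ) (m s : Fin d → ℝ) (u₀ : Fin d → ℝ)
    (hm : ∀ i, 0 < m i) (hs : ∀ i, 0 < s i)
    (S U : Fin d → ℝ → ℝ)
    (hS : ∀ i, ∀ t : ℝ, S i t =
      m i * (m i * Real.sinh (m i * t) + s i * Real.cosh (m i * t)) /
        (m i * Real.cosh (m i * t) + s i * Real.sinh (m i * t)))
    (hU : ∀ i, ∀ t : ℝ, U i t =
      m i * u₀ i / (m i * Real.cosh (m i * t) + s i * Real.sinh (m i * t)))
    (a : (Fin d → ℝ) → ℝ)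
    (ha : ∀ x : Fin d → ℝ, a x = -(1 / 2 : ℝ) * ∑ i, (x i) ^ 2)
    (u : ℝ → (Fin d → ℝ) → ℝ)
    (hu : ∀ (t : ℝ) (x : Fin d → ℝ), u t x =
      (2 * Real.pi) ^ (-(d : ℝ) / 2) * (∏ i, (S i t) ^ (-(1 : ℝ) / 2)) *
        Real.exp (-∑ i, (x i - U i t) ^ 2 / (2 * S i t))) :
    ∀ (t : ℝ), 0 ≤ t → ∀ (x : Fin d → ℝ),
      HasDerivAt (fun τ => u τ x)
        (u t x * (a x - ∫ y : Fin d → ℝ, u t y * a y) +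
          ∑ i, (1 / 2 : ℝ) * (m i) ^ 2 *
            deriv (deriv (fun y : ℝ => u t (Function.update x i y))) (x i)) t := by
  intro t ht x
  set C : ℝ := (2 * Real.pi) ^ (-(d:ℝ)/2) with hC
  set D : Fin d → ℝ → ℝ := fun i τ => m i * Real.cosh (m i * τ) + s i * Real.sinh (m i * τ)
    with hD
  set N : Fin d → ℝ → ℝ := fun i τ => m i * Real.sinh (m i * τ) + s i * Real.cosh (m i * τ)
    with hN
  have hDpos : ∀ i, ∀ τ : ℝ, 0 ≤ τ → 0 < D i τ := by
    intro i τ hτ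
    have h1 : 0 < m i * Real.cosh (m i * τ) := mul_pos (hm i) (Real.cosh_pos _)
    have h2 : 0 ≤ s i * Real.sinh (m i * τ) :=
      mul_nonneg (hs i).le (Real.sinh_nonneg_iff.mpr (mul_nonneg (hm i).le hτ))
    simpa [hD] using add_pos_of_pos_of_nonneg h1 h2
  have hNpos : ∀ i, ∀ τ : ℝ, 0 ≤ τ → 0 < N i τ := by
    intro i τ hτ
    have h1 : 0 < s i * Real.cosh (m i * τ) := mul_pos (hs i) (Real.cosh_pos _)
    have h2 : 0 ≤ m i * Real.sinh (m i * τ) :=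
      mul_nonneg (hm i).le (Real.sinh_nonneg_iff.mpr (mul_nonneg (hm i).le hτ))
    simpa [hN] using add_pos_of_nonneg_of_pos h2 h1
  have hSpos : ∀ i, ∀ τ : ℝ, 0 < D i τ → 0 < N i τ → 0 < S i τ := by
    intro i τ h1 h2
    rw [hS i τ]
    exact div_pos (mul_pos (hm i) h2) h1
  have hStpos : ∀ i, 0 < S i t := fun i => hSpos i t (hDpos i t ht) (hNpos i t ht)
  have hSne : ∀ i, S i t ≠ 0 := fun i => (hStpos i).ne'
  have hDne : ∀ i, D i t ≠ 0 := fun i => (hDpos i t ht).ne'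
  -- eventual positivity
  have hev : ∀ᶠ τ in 𝓝 t, ∀ i, 0 < S i τ := by
    rw [Filter.eventually_all]
    intro i
    have hDc : Continuous (D i) := by
      rw [hD]; fun_prop
    have hNc : Continuous (N i) := by
      rw [hN]; fun_prop
    have h1 := (hDc.continuousAt (x := t)).eventually (eventually_gt_nhds (hDpos i t ht))
    have h2 := (hNc.continuousAt (x := t)).eventually (eventually_gt_nhds (hNpos i t ht))
    filter_upwards [h1, h2] with τ hτ1 hτ2
    exact hSpos i τ hτ1 hτ2
  -- derivatives of D
  have hDder : ∀ i, HasDerivAt (D i) (m i * N i t) t := by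
    intro i
    have hmul : HasDerivAt (fun τ : ℝ => m i * τ) (m i) t := by
      simpa using (hasDerivAt_id t).const_mul (m i)
    have h1 := (hmul.cosh).const_mul (m i)
    have h2 := (hmul.sinh).const_mul (s i)
    have h3 := h1.add h2
    rw [hD, hN]
    refine h3.congr_deriv ?_
    ring
  have hNder : ∀ i, HasDerivAt (N i) (m i * D i t) t := by
    intro i
    have hmul : HasDerivAt (fun τ : ℝ => m i * τ) (m i) t := by
      simpa using (hasDerivAt_id t).const_mul (m i)
    have h1 := (hmul.sinh).const_mul (m i)
    have h2 := (hmul.cosh).const_mul (s i)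
    have h3 := h1.add h2
    rw [hD, hN]
    refine h3.congr_deriv ?_
    ring
  have hSder : ∀ i, HasDerivAt (S i) (m i ^ 2 - S i t ^ 2) t := by
    intro i
    have hdiv := ((hNder i).const_mul (m i)).div (hDder i) (hDne i)
    have heqS : S i =ᶠ[𝓝 t] (fun τ => m i * N i τ / D i τ) :=
      Filter.Eventually.of_forall (fun τ => by rw [hS i τ, hN, hD])
    have h := hdiv.congr_of_eventuallyEq heqS
    refine h.congr_deriv ?_
    rw [hS i t]
    have h1 := hDne i
    simp only [hN, hD] at h1 ⊢
    field_simp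
  have hUder : ∀ i, HasDerivAt (U i) (-(U i t) * S i t) t := by
    intro i
    have hdiv := (hasDerivAt_const t (m i * u₀ i)).div (hDder i) (hDne i)
    have heqU : U i =ᶠ[𝓝 t] (fun τ => m i * u₀ i / D i τ) :=
      Filter.Eventually.of_forall (fun τ => by rw [hU i τ, hD])
    have h := hdiv.congr_of_eventuallyEq heqU
    refine h.congr_deriv ?_
    rw [hU i t, hS i t]
    have h1 := hDne i
    simp only [hN, hD] at h1 ⊢
    field_simp
    try ring
    try tauto
  -- clean derivative values
  set Ad : Fin d → ℝ := fun i => (-(1:ℝ)/2) * ((m i ^ 2 - S i t ^ 2) / S i t) with hAd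
  set Bd : Fin d → ℝ := fun i => (x i - U i t) * U i t
      - (x i - U i t) ^ 2 * (m i ^ 2 - S i t ^ 2) / (2 * S i t ^ 2) with hBd
  have hA : ∀ i, HasDerivAt (fun τ => (-(1:ℝ)/2) * Real.log (S i τ)) (Ad i) t := by
    intro i
    exact ((hSder i).log (hSne i)).const_mul (-(1:ℝ)/2)
  have hB : ∀ i, HasDerivAt (fun τ => (x i - U i τ) ^ 2 / (2 * S i τ)) (Bd i) t := by
    intro i
    have hnum := ((hasDerivAt_const t (x i)).fun_sub (hUder i)).fun_pow 2
    have hden := (hSder i).const_mul 2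
    have h2ne : 2 * S i t ≠ 0 := by
      have := hStpos i; positivity
    have h := hnum.fun_div hden h2ne
    refine h.congr_deriv ?_
    rw [hBd]
    have hS0 := hSne i
    push_cast
    field_simp
    ring
  have hG : HasDerivAt
      (fun τ => (∑ i, (-(1:ℝ)/2) * Real.log (S i τ)) - ∑ i, (x i - U i τ) ^ 2 / (2 * S i τ))
      ((∑ i, Ad i) - ∑ i, Bd i) t :=
    (HasDerivAt.fun_sum (fun i _ => hA i)).fun_sub (HasDerivAt.fun_sum (fun i _ => hB i))
  have hΦ := (hG.exp).const_mul C
  -- eventual equality with u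
  have heq : (fun τ => u τ x) =ᶠ[𝓝 t]
      (fun τ => C * Real.exp ((∑ i, (-(1:ℝ)/2) * Real.log (S i τ))
        - ∑ i, (x i - U i τ) ^ 2 / (2 * S i τ))) := by
    filter_upwards [hev] with τ hτ
    rw [hu τ x]
    have e3 : ∏ i, (S i τ) ^ (-(1:ℝ)/2)
        = Real.exp (∑ i, (-(1:ℝ)/2) * Real.log (S i τ)) := by
      rw [Real.exp_sum]
      exact Finset.prod_congr rfl fun i _ => by
        rw [Real.rpow_def_of_pos (hτ i), mul_comm]
    rw [e3, mul_assoc, ← Real.exp_add, ← sub_eq_add_neg]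
  have hut : u t x = C * Real.exp ((∑ i, (-(1:ℝ)/2) * Real.log (S i t))
      - ∑ i, (x i - U i t) ^ 2 / (2 * S i t)) := heq.self_of_nhds
  have final := hΦ.congr_of_eventuallyEq heq
  -- the integral
  have hI : (∫ y : Fin d → ℝ, u t y * a y) = ∑ i, -(1/2:ℝ) * (S i t + U i t ^ 2) := by
    rw [← integral_prod_gauss d (fun i => S i t) (fun i => U i t) hStpos]
    apply MeasureTheory.integral_congr_ae
    filter_upwards with y
    rw [hu t y, ha y, hC]
  -- second derivatives
  have hDD : ∀ i, deriv (deriv (fun y : ℝ => u t (Function.update x i y))) (x i)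
      = u t x * ((x i - U i t) ^ 2 / S i t ^ 2 - 1 / S i t) := by
    intro i
    have hupdate : (fun y : ℝ => u t (Function.update x i y))
        = fun y => (C * (∏ j, (S j t) ^ (-(1:ℝ)/2)) *
            Real.exp (-(∑ j ∈ Finset.univ.erase i, (x j - U j t) ^ 2 / (2 * S j t)))) *
          Real.exp (-((y - U i t) ^ 2 / (2 * S i t))) := by
      funext y
      rw [hu t (Function.update x i y)]
      have hsum : ∑ j, (Function.update x i y j - U j t) ^ 2 / (2 * S j t)
          = (y - U i t) ^ 2 / (2 * S i t)
            + ∑ j ∈ Finset.univ.erase i, (x j - U j t) ^ 2 / (2 * S j t) := by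
        rw [← Finset.add_sum_erase _
          (fun j => (Function.update x i y j - U j t) ^ 2 / (2 * S j t)) (Finset.mem_univ i)]
        congr 1
        · rw [Function.update_self]
        · exact Finset.sum_congr rfl fun j hj => by
            rw [Function.update_of_ne (Finset.ne_of_mem_erase hj)]
      rw [hsum, neg_add, Real.exp_add, hC]
      ring
    have hux : u t x = (C * (∏ j, (S j t) ^ (-(1:ℝ)/2)) *
        Real.exp (-(∑ j ∈ Finset.univ.erase i, (x j - U j t) ^ 2 / (2 * S j t)))) *
        Real.exp (-((x i - U i t) ^ 2 / (2 * S i t))) := by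
      rw [hu t x]
      have hsum : ∑ j, (x j - U j t) ^ 2 / (2 * S j t)
          = (x i - U i t) ^ 2 / (2 * S i t)
            + ∑ j ∈ Finset.univ.erase i, (x j - U j t) ^ 2 / (2 * S j t) := by
        rw [← Finset.add_sum_erase _
          (fun j => (x j - U j t) ^ 2 / (2 * S j t)) (Finset.mem_univ i)]
      rw [hsum, neg_add, Real.exp_add, hC]
      ring
    rw [hupdate, gauss_second_deriv _ _ _ (hSne i), ← hux]
  -- assemble
  have hsum2 : ∑ i, (1/2:ℝ) * m i ^ 2 *
      deriv (deriv (fun y : ℝ => u t (Function.update x i y))) (x i)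
      = u t x * ∑ i, (1/2:ℝ) * m i ^ 2 * ((x i - U i t) ^ 2 / S i t ^ 2 - 1 / S i t) := by
    rw [Finset.mul_sum]
    exact Finset.sum_congr rfl fun i _ => by rw [hDD i]; ring
  have hscal : (a x - ∑ i, -(1/2:ℝ) * (S i t + U i t ^ 2))
      + ∑ i, (1/2:ℝ) * m i ^ 2 * ((x i - U i t) ^ 2 / S i t ^ 2 - 1 / S i t)
      = (∑ i, Ad i) - ∑ i, Bd i := by
    rw [ha x, Finset.mul_sum, ← Finset.sum_sub_distrib, ← Finset.sum_add_distrib,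
      ← Finset.sum_sub_distrib]
    refine Finset.sum_congr rfl fun i _ => ?_
    rw [hAd, hBd]
    have := hSne i
    field_simp
    ring
  refine final.congr_deriv ?_
  rw [hsum2, hI, ← mul_add, hscal, hut]
  ring
end

section
/- Let m ∈ (0,∞) and s ∈ (0,∞), and define S(t) = m·(m sinh(m t) + s cosh(m t))/(m cosh(m t) + s sinh(m t)) for t ≥ 0. Then lim_{t→∞} S(t) = m, and S is monotone: if s < m then S is strictly increasing, if s > m then S is strictly decreasing, and if s = m then S is constant equal to m. -/
theorem stmt_8 (m s : ℝ) (hm : 0 < m) (hs : 0 < s)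
    (S : ℝ → ℝ)
    (hS : ∀ t : ℝ, S t =
      m * (m * Real.sinh (m * t) + s * Real.cosh (m * t)) /
        (m * Real.cosh (m * t) + s * Real.sinh (m * t))) :
    Filter.Tendsto S Filter.atTop (nhds m) ∧
    (s < m → StrictMonoOn S (Set.Ici (0 : ℝ))) ∧
    (m < s → StrictAntiOn S (Set.Ici (0 : ℝ))) ∧
    (s = m → ∀ t : ℝ, 0 ≤ t → S t = m) := by
  -- denominators are positive for t ≥ 0
  have hD : ∀ t : ℝ, 0 ≤ t → 0 < m * Real.cosh (m * t) + s * Real.sinh (m * t) := by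
    intro t ht
    have h1 : 0 < Real.cosh (m * t) := Real.cosh_pos (x := m * t)
    have h2 : 0 ≤ Real.sinh (m * t) := Real.sinh_nonneg_iff.mpr (by positivity)
    positivity
  -- the key comparison for monotonicity
  have key : ∀ a b : ℝ, 0 ≤ a → a < b →
      (S b - S a) * ((m * Real.cosh (m * a) + s * Real.sinh (m * a)) *
        (m * Real.cosh (m * b) + s * Real.sinh (m * b)))
      = m * (m ^ 2 - s ^ 2) * Real.sinh (m * b - m * a) := by
    intro a b ha hab
    have hDa := hD a ha
    have hDb := hD b (ha.trans hab.le)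
    rw [hS a, hS b, Real.sinh_sub]
    rw [div_sub_div _ _ hDb.ne' hDa.ne', div_mul_eq_mul_div, div_eq_iff (by positivity)]
    ring
  constructor
  · -- limit
    set f : ℝ → ℝ := fun u => m * ((m + s) + (s - m) * u) / ((m + s) + (m - s) * u) with hf
    have hg : ∀ t : ℝ, 0 ≤ t → S t = f (Real.exp (-(2 * m) * t)) := by
      intro t ht
      have hE : Real.exp (-(2 * m) * t) = Real.exp (-(m * t)) * Real.exp (-(m * t)) := by
        rw [← Real.exp_add]; ring_nf
      have hepos : 0 < Real.exp (m * t) := Real.exp_pos _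
      have hege : 1 ≤ Real.exp (m * t) := by
        rw [show (1:ℝ) = Real.exp 0 by simp]
        exact Real.exp_le_exp.mpr (by positivity)
      have hDt := hD t ht
      have hu1 : (Real.exp (m*t))⁻¹ * (Real.exp (m*t))⁻¹ ≤ 1 := by
        rw [← one_mul (1:ℝ)]
        have h1 : (Real.exp (m*t))⁻¹ ≤ 1 := by
          rw [inv_le_one_iff₀]; right; exact hege
        have h2 : (0:ℝ) ≤ (Real.exp (m*t))⁻¹ := by positivity
        exact mul_le_mul h1 h1 h2 zero_le_one
      have hupos : 0 < (Real.exp (m*t))⁻¹ * (Real.exp (m*t))⁻¹ := by positivity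
      have hR : 0 < (m + s) + (m - s) * ((Real.exp (m*t))⁻¹ * (Real.exp (m*t))⁻¹) := by
        nlinarith
      rw [hS t, hf]
      simp only []
      rw [hE, Real.exp_neg, Real.sinh_eq, Real.cosh_eq, Real.exp_neg]
      rw [Real.sinh_eq, Real.cosh_eq, Real.exp_neg] at hDt
      rw [div_eq_div_iff (ne_of_gt hDt) (ne_of_gt hR)]
      field_simp
      ring
    have htend : Filter.Tendsto (fun t : ℝ => Real.exp (-(2 * m) * t)) Filter.atTop (nhds 0) := by
      have h1 : Filter.Tendsto (fun t : ℝ => (2 * m) * t) Filter.atTop Filter.atTop :=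
        Filter.Tendsto.const_mul_atTop (by positivity) Filter.tendsto_id
      have := Real.tendsto_exp_neg_atTop_nhds_zero.comp h1
      apply this.congr
      intro t; simp [Function.comp]
    have hcont : Filter.Tendsto f (nhds 0) (nhds (f 0)) := by
      apply Filter.Tendsto.div
      · exact (continuous_const.mul (continuous_const.add
          (continuous_const.mul continuous_id))).tendsto 0
      · exact (continuous_const.add (continuous_const.mul continuous_id)).tendsto 0
      · simp; linarith
    have hf0 : f 0 = m := by
      rw [hf]; simp only [mul_zero, add_zero]
      rw [mul_div_assoc, div_self (by positivity), mul_one]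
    rw [hf0] at hcont
    have hcomp := hcont.comp htend
    apply hcomp.congr'
    filter_upwards [Filter.eventually_ge_atTop (0:ℝ)] with t ht
    exact (hg t ht).symm
  refine ⟨?_, ?_, ?_⟩
  · intro hsm a ha b hb hab
    have hDa := hD a ha
    have hDb := hD b hb
    have hk := key a b ha hab
    have hspos : 0 < Real.sinh (m * b - m * a) := Real.sinh_pos_iff.mpr (by nlinarith)
    have : 0 < (S b - S a) * ((m * Real.cosh (m * a) + s * Real.sinh (m * a)) *
        (m * Real.cosh (m * b) + s * Real.sinh (m * b))) := by
      rw [hk]; have : 0 < m ^ 2 - s ^ 2 := by nlinarith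
      positivity
    nlinarith [mul_pos hDa hDb]
  · intro hsm a ha b hb hab
    have hDa := hD a ha
    have hDb := hD b hb
    have hk := key a b ha hab
    have hspos : 0 < Real.sinh (m * b - m * a) := Real.sinh_pos_iff.mpr (by nlinarith)
    have hneg : (S b - S a) * ((m * Real.cosh (m * a) + s * Real.sinh (m * a)) *
        (m * Real.cosh (m * b) + s * Real.sinh (m * b))) < 0 := by
      rw [hk]
      have h1 : m ^ 2 - s ^ 2 < 0 := by nlinarith
      have := mul_pos hm hspos
      nlinarith
    nlinarith [mul_pos hDa hDb]
  · intro hsm t ht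
    have hDt := hD t ht
    rw [hS t, hsm] at *
    rw [div_eq_iff (by linarith)]
    ring
end
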